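/- Let a ∈ ℝ \ 2πℤ and α = min{|a − 2πn| : n ∈ ℤ}. Let γ be locally absolutely continuous on (0,∞) with γ(t) mod 2π 1-periodic (i.e. γ(t+1) − γ(t) ∈ 2πℤ for all t), and let Γ ∈ L²_loc(0,∞) be 1-periodic. Suppose θ : (0,∞) → ℝ is locally absolutely continuous and satisfies |θ′(t) − a − γ′(t)| ≤ t^{−2/3} for a.e. t ∈ (0,∞). Then for any x ≥ x₀ > r(α) := s(α,2/3,1) + 4·r(α,2/3,1)·(α^{−4/3} + 3)^{1/2}, one has |∫_{x₀}^x Γ(t)·sin θ(t)/t dt| ≤ ‖Γ‖₂·r(α)/x₀^{2/3}, where ‖Γ‖₂ = (∫₀¹ Γ(t)² dt)^{1/2}. -/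

import Mathlib

open MeasureTheory Real Set

noncomputable section

/-- `s(α,β,C) = (100·C·α^{β-1} + 10⁴)^{1/β}·α⁻¹`. -/
def sConst (α β C : ℝ) : ℝ := (100 * C * α ^ (β - 1) + 10 ^ 4) ^ (1 / β) / α

/-- `r(α,β,C) = 30·C·β⁻¹·α^{β-1} + 10π`. -/
def rConst (α β C : ℝ) : ℝ := 30 * C / β * α ^ (β - 1) + 10 * π

/-- `r(α) = s(α,2/3,1) + 4·r(α,2/3,1)·(α^{-4/3} + 3)^{1/2}`. -/
def rA (α : ℝ) : ℝ :=
  sConst α (2 / 3) 1 + 4 * rConst α (2 / 3) 1 * Real.sqrt (α ^ (-(4 : ℝ) / 3) + 3)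


private lemma per_II {f : ℝ → ℝ} (hper : Function.Periodic f 1)
    (h : IntervalIntegrable f volume 0 1) (c d : ℝ) : IntervalIntegrable f volume c d := by
  have hint : ∀ n : ℤ, IntervalIntegrable f volume n (n + 1) := by
    intro n
    have h2 : IntervalIntegrable (fun x => f (x - n)) volume (0 + n) (1 + n) :=
      h.comp_sub_right (n : ℝ)
    have h3 : (fun x : ℝ => f (x - n)) = f := by
      funext x
      simpa using hper.sub_int_mul_eq (x := x) n
    rw [h3] at h2
    simpa [add_comm] using h2
  have hint2' : ∀ (n : ℤ) (k : ℕ), IntervalIntegrable f volume n (n + k) := by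
    intro n k
    induction k with
    | zero => simpa using (IntervalIntegrable.refl : IntervalIntegrable f volume n n)
    | succ k ih =>
      have hb := hint (n + k)
      rw [show ((n + k : ℤ) : ℝ) = (n : ℝ) + (k : ℕ) by push_cast; ring] at hb
      have h4 := ih.trans hb
      rwa [show ((n : ℝ) + (k : ℕ)) + 1 = (n : ℝ) + ((k + 1 : ℕ) : ℕ) by push_cast; ring] at h4
  have hint2 : ∀ n m : ℤ, n ≤ m → IntervalIntegrable f volume n m := by
    intro n m hnm
    have h5 := hint2' n (m - n).toNat
    have hc : ((n : ℝ) + ((m - n).toNat : ℕ)) = (m : ℝ) := by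
      have : ((m - n).toNat : ℤ) = m - n := Int.toNat_of_nonneg (by omega)
      have : (((m - n).toNat : ℕ) : ℝ) = (m : ℝ) - n := by exact_mod_cast congrArg (Int.cast : ℤ → ℝ) this
      rw [this]; ring
    rwa [hc] at h5
  have hnm : (⌊min c d⌋ : ℝ) ≤ (⌈max c d⌉ : ℝ) :=
    le_trans (Int.floor_le _) (le_trans (le_trans (min_le_max) (Int.le_ceil _)) le_rfl)
  refine (hint2 ⌊min c d⌋ ⌈max c d⌉ ?_).mono_set ?_
  · exact_mod_cast hnm
  · rw [uIcc_of_le hnm]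
    refine uIcc_subset_Icc ?_ ?_ <;> constructor
    · exact le_trans (Int.floor_le _) (min_le_left _ _)
    · exact le_trans (le_trans (le_max_left _ _) (Int.le_ceil _)) le_rfl
    · exact le_trans (Int.floor_le _) (min_le_right _ _)
    · exact le_trans (le_trans (le_max_right _ _) (Int.le_ceil _)) le_rfl

private lemma abs_II {Γ : ℝ → ℝ} (hΓmeas : Measurable Γ) (hΓper : Function.Periodic Γ 1)
    (hΓL2 : IntervalIntegrable (fun t => Γ t ^ 2) volume 0 1) (c d : ℝ) :
    IntervalIntegrable (fun t => |Γ t|) volume c d := by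
  have hsqper : Function.Periodic (fun t => Γ t ^ 2) 1 := fun t => by simp [hΓper t]
  have hsq := per_II hsqper hΓL2 c d
  refine IntervalIntegrable.mono_fun' (hsq.add (intervalIntegrable_const : IntervalIntegrable (fun _ => (1:ℝ)) volume c d)) ?_ ?_
  · exact (hΓmeas.abs).aestronglyMeasurable
  · refine Filter.Eventually.of_forall fun t => ?_
    have : |Γ t| ≤ Γ t ^ 2 + 1 := by nlinarith [sq_abs (Γ t), abs_nonneg (Γ t), sq_nonneg (|Γ t| - 1)]
    simpa using this

private lemma block_L1 {Γ : ℝ → ℝ} (hΓmeas : Measurable Γ) (hΓper : Function.Periodic Γ 1)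
    (hΓL2 : IntervalIntegrable (fun t => Γ t ^ 2) volume 0 1) (c : ℝ) :
    ∫ t in c..(c+1), |Γ t| ≤ Real.sqrt (∫ t in (0:ℝ)..1, Γ t ^ 2) := by
  set S := ∫ t in (0:ℝ)..1, Γ t ^ 2 with hS
  have hsqper : Function.Periodic (fun t => Γ t ^ 2) 1 := fun t => by simp [hΓper t]
  have hSnn : 0 ≤ S := intervalIntegral.integral_nonneg (by norm_num) (fun u _ => sq_nonneg _)
  have hSper : (∫ t in c..(c+1), Γ t ^ 2) = S := by
    have := hsqper.intervalIntegral_add_eq c 0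
    simpa using this
  have hsqint := per_II hsqper hΓL2 c (c+1)
  have habs := abs_II hΓmeas hΓper hΓL2 c (c+1)
  have key : ∀ l : ℝ, 0 < l → ∫ t in c..(c+1), |Γ t| ≤ (l * S + l⁻¹) / 2 := by
    intro l hl
    have hmono : ∫ t in c..(c+1), |Γ t| ≤ ∫ t in c..(c+1), (l * Γ t ^ 2 + l⁻¹) / 2 := by
      refine intervalIntegral.integral_mono_on (by linarith) habs ?_ ?_
      · exact ((hsqint.const_mul l).add intervalIntegrable_const).div_const 2
      · intro u _
        have h2 : 2 * l * |Γ u| ≤ l ^ 2 * Γ u ^ 2 + 1 := by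
          nlinarith [sq_nonneg (l * |Γ u| - 1), sq_abs (Γ u)]
        have h4 : (l * Γ u ^ 2 + l⁻¹) * l = l ^ 2 * Γ u ^ 2 + 1 := by
          field_simp
        rw [le_div_iff₀ two_pos, ← mul_le_mul_iff_of_pos_right hl, h4]
        nlinarith [h2]
    have hcomp : ∫ t in c..(c+1), (l * Γ t ^ 2 + l⁻¹) / 2 = (l * S + l⁻¹) / 2 := by
      rw [intervalIntegral.integral_div, intervalIntegral.integral_add (hsqint.const_mul l)
        intervalIntegrable_const, intervalIntegral.integral_const_mul, hSper,
        intervalIntegral.integral_const]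
      simp
    linarith [hmono, hcomp.le, hcomp.ge]
  rcases eq_or_lt_of_le hSnn with h0 | hpos
  · have : ∫ t in c..(c+1), |Γ t| ≤ 0 := by
      refine le_of_forall_pos_le_add ?_
      intro ε hε
      have := key (1 / (2 * ε)) (by positivity)
      rw [← h0] at this
      calc ∫ t in c..(c+1), |Γ t| ≤ ((1 / (2*ε)) * 0 + (1 / (2*ε))⁻¹) / 2 := this
        _ = ε := by field_simp; ring
        _ = 0 + ε := by ring
    calc ∫ t in c..(c+1), |Γ t| ≤ 0 := this
      _ ≤ Real.sqrt S := Real.sqrt_nonneg _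
  · have hs : 0 < Real.sqrt S := Real.sqrt_pos.2 hpos
    have := key (Real.sqrt S)⁻¹ (by positivity)
    calc ∫ t in c..(c+1), |Γ t| ≤ ((Real.sqrt S)⁻¹ * S + ((Real.sqrt S)⁻¹)⁻¹) / 2 := this
      _ = (S / Real.sqrt S + Real.sqrt S) / 2 := by rw [inv_inv]; ring
      _ = Real.sqrt S := by rw [Real.div_sqrt]; ring

private lemma rpow_contOn (r : ℝ) {c d : ℝ} (hc : 0 < c) (hcd : c ≤ d) :
    ContinuousOn (fun t : ℝ => t ^ r) (uIcc c d) := by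
  intro t ht
  rw [uIcc_of_le hcd] at ht
  exact (Real.continuousAt_rpow_const t r (Or.inl (by linarith [ht.1]))).continuousWithinAt

private lemma wII {Γ : ℝ → ℝ} (hΓmeas : Measurable Γ) (hΓper : Function.Periodic Γ 1)
    (hΓL2 : IntervalIntegrable (fun t => Γ t ^ 2) volume 0 1) (r : ℝ) {c d : ℝ}
    (hc : 0 < c) (hcd : c ≤ d) :
    IntervalIntegrable (fun t => |Γ t| * t ^ r) volume c d :=
  (abs_II hΓmeas hΓper hΓL2 c d).mul_continuousOn (rpow_contOn r hc hcd)

private lemma block_w {Γ : ℝ → ℝ} (hΓmeas : Measurable Γ) (hΓper : Function.Periodic Γ 1)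
    (hΓL2 : IntervalIntegrable (fun t => Γ t ^ 2) volume 0 1) {r : ℝ} (hr : r ≤ 0)
    {c : ℝ} (hc : 0 < c) :
    ∫ t in c..(c+1), |Γ t| * t ^ r ≤ Real.sqrt (∫ t in (0:ℝ)..1, Γ t ^ 2) * c ^ r := by
  have h1 : ∫ t in c..(c+1), |Γ t| * t ^ r ≤ ∫ t in c..(c+1), |Γ t| * c ^ r := by
    refine intervalIntegral.integral_mono_on (by linarith) (wII hΓmeas hΓper hΓL2 r hc (by linarith)) ((abs_II hΓmeas hΓper hΓL2 c (c+1)).mul_const _) ?_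
    intro u hu
    exact mul_le_mul_of_nonneg_left
      (Real.rpow_le_rpow_of_nonpos hc hu.1 hr) (abs_nonneg _)
  have h2 : ∫ t in c..(c+1), |Γ t| * c ^ r = (∫ t in c..(c+1), |Γ t|) * c ^ r :=
    intervalIntegral.integral_mul_const _ _
  have h3 := block_L1 hΓmeas hΓper hΓL2 c
  have h4 : (0:ℝ) ≤ c ^ r := Real.rpow_nonneg hc.le r
  calc ∫ t in c..(c+1), |Γ t| * t ^ r ≤ (∫ t in c..(c+1), |Γ t|) * c ^ r := by rw [← h2]; exact h1
    _ ≤ Real.sqrt (∫ t in (0:ℝ)..1, Γ t ^ 2) * c ^ r := by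
        exact mul_le_mul_of_nonneg_right h3 h4

private lemma step_numeric {d : ℝ} (hd : 1 ≤ d) :
    (d+1) ^ (-(5:ℝ)/3) ≤ (3/2) * (d ^ (-(2:ℝ)/3) - (d+1) ^ (-(2:ℝ)/3)) := by
  have h0 : (0:ℝ) ∉ uIcc d (d+1) := by
    rw [uIcc_of_le (by linarith)]
    intro h; exact absurd h.1 (by linarith)
  have hint : ∫ t in d..(d+1), t ^ (-(5:ℝ)/3) =
      ((d+1) ^ (-(5:ℝ)/3 + 1) - d ^ (-(5:ℝ)/3 + 1)) / (-(5:ℝ)/3 + 1) :=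
    integral_rpow (Or.inr ⟨by norm_num, h0⟩)
  have hII : IntervalIntegrable (fun t : ℝ => t ^ (-(5:ℝ)/3)) volume d (d+1) :=
    intervalIntegral.intervalIntegrable_rpow (Or.inr h0)
  have hmono : (d+1) ^ (-(5:ℝ)/3) ≤ ∫ t in d..(d+1), t ^ (-(5:ℝ)/3) := by
    have : ∫ t in d..(d+1), (d+1) ^ (-(5:ℝ)/3) ≤ ∫ t in d..(d+1), t ^ (-(5:ℝ)/3) := by
      refine intervalIntegral.integral_mono_on (by linarith) intervalIntegrable_const hII ?_
      intro u hu
      exact Real.rpow_le_rpow_of_nonpos (by linarith [hu.1]) hu.2 (by norm_num)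
    simpa using this
  have he : (-(5:ℝ)/3 + 1) = -(2:ℝ)/3 := by norm_num
  rw [hint, he] at hmono
  calc (d+1) ^ (-(5:ℝ)/3) ≤ ((d+1) ^ (-(2:ℝ)/3) - d ^ (-(2:ℝ)/3)) / (-(2:ℝ)/3) := hmono
    _ = (3/2) * (d ^ (-(2:ℝ)/3) - (d+1) ^ (-(2:ℝ)/3)) := by ring

private lemma tail_sum {Γ : ℝ → ℝ} (hΓmeas : Measurable Γ) (hΓper : Function.Periodic Γ 1)
    (hΓL2 : IntervalIntegrable (fun t => Γ t ^ 2) volume 0 1) {c : ℝ} (hc : 1 ≤ c) :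
    ∀ n : ℕ, ∫ t in c..(c + (n + 1 : ℕ)), |Γ t| * t ^ (-(5:ℝ)/3) ≤
      Real.sqrt (∫ t in (0:ℝ)..1, Γ t ^ 2) *
        (c ^ (-(5:ℝ)/3) + (3/2) * (c ^ (-(2:ℝ)/3) - (c + (n : ℕ)) ^ (-(2:ℝ)/3))) := by
  set N := Real.sqrt (∫ t in (0:ℝ)..1, Γ t ^ 2) with hN
  have hc0 : (0:ℝ) < c := by linarith
  intro n
  induction n with
  | zero =>
    have := block_w hΓmeas hΓper hΓL2 (r := -(5:ℝ)/3) (by norm_num) hc0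
    simpa using this
  | succ n ih =>
    have hsplit : ∫ t in c..(c + (n + 2 : ℕ)), |Γ t| * t ^ (-(5:ℝ)/3) =
        (∫ t in c..(c + (n + 1 : ℕ)), |Γ t| * t ^ (-(5:ℝ)/3)) +
          ∫ t in (c + (n + 1 : ℕ))..(c + (n + 1 : ℕ) + 1), |Γ t| * t ^ (-(5:ℝ)/3) := by
      rw [intervalIntegral.integral_add_adjacent_intervals
        (wII hΓmeas hΓper hΓL2 _ hc0 (by push_cast; linarith))
        (wII hΓmeas hΓper hΓL2 _ (by push_cast; linarith) (by push_cast; linarith))]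
      congr 1
      push_cast; ring
    have hblock := block_w hΓmeas hΓper hΓL2 (r := -(5:ℝ)/3) (by norm_num)
      (show (0:ℝ) < c + (n + 1 : ℕ) by push_cast; linarith)
    have hstep := step_numeric (d := c + (n + 1 : ℕ) - 1) (by push_cast; linarith)
    have hd1 : c + (n + 1 : ℕ) - 1 + 1 = c + (n + 1 : ℕ) := by ring
    rw [hd1] at hstep
    have hd2 : c + (n + 1 : ℕ) - 1 = c + (n : ℕ) := by push_cast; ring
    rw [hd2] at hstep
    have hNnn : 0 ≤ N := Real.sqrt_nonneg _
    have h6 : (c + (n + 1 : ℕ) : ℝ) ^ (-(5:ℝ)/3) ≤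
        (3/2) * ((c + (n : ℕ)) ^ (-(2:ℝ)/3) - (c + (n + 1 : ℕ)) ^ (-(2:ℝ)/3)) := by
      have : ((c + (n : ℕ)) + 1 : ℝ) = c + (n + 1 : ℕ) := by push_cast; ring
      rw [← this]
      rw [← this] at hstep
      exact hstep
    rw [hsplit]
    have hb2 : ∫ t in (c + (n + 1 : ℕ))..(c + (n + 1 : ℕ) + 1), |Γ t| * t ^ (-(5:ℝ)/3) ≤
        N * ((3/2) * ((c + (n : ℕ)) ^ (-(2:ℝ)/3) - (c + (n + 1 : ℕ)) ^ (-(2:ℝ)/3))) :=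
      le_trans hblock (mul_le_mul_of_nonneg_left h6 hNnn)
    calc _ ≤ N * (c ^ (-(5:ℝ)/3) + (3/2) * (c ^ (-(2:ℝ)/3) - (c + (n : ℕ)) ^ (-(2:ℝ)/3))) +
          N * ((3/2) * ((c + (n : ℕ)) ^ (-(2:ℝ)/3) - (c + (n + 1 : ℕ)) ^ (-(2:ℝ)/3))) :=
        add_le_add ih hb2
      _ = N * (c ^ (-(5:ℝ)/3) + (3/2) * (c ^ (-(2:ℝ)/3) - (c + (n + 1 : ℕ)) ^ (-(2:ℝ)/3))) := by
        ring

private lemma tail_bound {Γ : ℝ → ℝ} (hΓmeas : Measurable Γ) (hΓper : Function.Periodic Γ 1)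
    (hΓL2 : IntervalIntegrable (fun t => Γ t ^ 2) volume 0 1) {c y : ℝ} (hc : 1 ≤ c)
    (hcy : c ≤ y) :
    ∫ t in c..y, |Γ t| * t ^ (-(5:ℝ)/3) ≤
      Real.sqrt (∫ t in (0:ℝ)..1, Γ t ^ 2) * (5/2) * c ^ (-(2:ℝ)/3) := by
  set N := Real.sqrt (∫ t in (0:ℝ)..1, Γ t ^ 2) with hN
  have hc0 : (0:ℝ) < c := by linarith
  set n := ⌈y - c⌉₊ with hn
  have hyn : y ≤ c + ((n + 1 : ℕ) : ℝ) := by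
    have := Nat.le_ceil (y - c)
    push_cast
    push_cast at this
    linarith
  have hmono : ∫ t in c..y, |Γ t| * t ^ (-(5:ℝ)/3) ≤
      ∫ t in c..(c + ((n + 1 : ℕ) : ℝ)), |Γ t| * t ^ (-(5:ℝ)/3) := by
    refine intervalIntegral.integral_mono_interval le_rfl hcy hyn ?_
      (wII hΓmeas hΓper hΓL2 _ hc0 (by push_cast; linarith))
    filter_upwards [ae_restrict_mem measurableSet_Ioc] with u hu
    have hu0 : (0:ℝ) < u := lt_of_le_of_lt hc0.le hu.1
    positivity
  have hsum := tail_sum hΓmeas hΓper hΓL2 hc n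
  have hNnn : 0 ≤ N := Real.sqrt_nonneg _
  have h57 : c ^ (-(5:ℝ)/3) ≤ c ^ (-(2:ℝ)/3) :=
    Real.rpow_le_rpow_of_exponent_le hc (by norm_num)
  have h8 : (0:ℝ) ≤ (c + (n : ℕ)) ^ (-(2:ℝ)/3) := Real.rpow_nonneg (by push_cast; linarith) _
  calc ∫ t in c..y, |Γ t| * t ^ (-(5:ℝ)/3)
      ≤ N * (c ^ (-(5:ℝ)/3) + (3/2) * (c ^ (-(2:ℝ)/3) - (c + (n : ℕ)) ^ (-(2:ℝ)/3))) :=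
        le_trans hmono hsum
    _ ≤ N * ((5/2) * c ^ (-(2:ℝ)/3)) := by
        refine mul_le_mul_of_nonneg_left ?_ hNnn
        nlinarith [h57, h8]
    _ = N * (5/2) * c ^ (-(2:ℝ)/3) := by ring

private lemma exp_aI_sub_one_lb {a α : ℝ} (hα0 : 0 < α) (hαπ : α ≤ π)
    (hex : ∃ n : ℤ, α = |a - 2 * π * n|) :
    2 * α / π ≤ ‖Complex.exp (a * Complex.I) - 1‖ := by
  obtain ⟨n, hn⟩ := hex
  have hcos : Real.cos a = Real.cos α := by
    have h1 : a = (a - 2 * π * n) + n * (2 * π) := by ring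
    rw [h1, Real.cos_add_int_mul_two_pi]
    rcases abs_cases (a - 2 * π * n) with ⟨h2, _⟩ | ⟨h2, _⟩
    · rw [← h2, ← hn]
    · rw [show a - 2*π*n = -α by linarith [hn.symm ▸ h2], Real.cos_neg]
  have him : (Complex.exp (a * Complex.I) - 1).im = Real.sin a := by
    simp [Complex.sub_im, Complex.exp_ofReal_mul_I_im]
  have hre : (Complex.exp (a * Complex.I) - 1).re = Real.cos a - 1 := by
    simp [Complex.sub_re, Complex.exp_ofReal_mul_I_re]
  have hsq : ‖Complex.exp (a * Complex.I) - 1‖ ^ 2 = 2 - 2 * Real.cos α := by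
    rw [Complex.sq_norm, Complex.normSq_apply, hre, him, hcos]
    have hc : Real.sin a ^ 2 = 1 - Real.cos a ^ 2 := by
      have := Real.sin_sq_add_cos_sq a; linarith
    nlinarith [hc, hcos]
  have hsin : α / π ≤ Real.sin (α / 2) := by
    have := Real.mul_le_sin (x := α / 2) (by linarith) (by linarith)
    calc α / π = 2 / π * (α / 2) := by field_simp
      _ ≤ Real.sin (α / 2) := this
  have hsinsq : Real.sin (α / 2) ^ 2 = 1 / 2 - Real.cos α / 2 := by
    have := Real.sin_sq_eq_half_sub (α / 2)
    rwa [show 2 * (α / 2) = α by ring] at this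
  have hπ : (0:ℝ) < π := Real.pi_pos
  have hkey : (2 * α / π) ^ 2 ≤ 2 - 2 * Real.cos α := by
    have h5 : (α / π) ^ 2 ≤ 1 / 2 - Real.cos α / 2 := by
      rw [← hsinsq]
      exact pow_le_pow_left₀ (by positivity) hsin 2
    have h6 : (2 * α / π) ^ 2 = 4 * (α / π) ^ 2 := by ring
    linarith [h5]
  have habs : 0 ≤ ‖Complex.exp (a * Complex.I) - 1‖ := norm_nonneg _
  nlinarith [hsq, hkey, habs, sq_nonneg (2 * α / π - ‖Complex.exp (a * Complex.I) - 1‖)]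

private lemma exp_eps_sub_one {ε : ℝ} (hε : |ε| ≤ 1) :
    ‖Complex.exp (ε * Complex.I) - 1‖ ≤ 2 * |ε| := by
  have h1 : ‖(ε : ℂ) * Complex.I‖ ≤ 1 := by
    rw [norm_mul, Complex.norm_I, mul_one, Complex.norm_real, Real.norm_eq_abs]
    exact hε
  have := Complex.norm_exp_sub_one_le (x := (ε : ℂ) * Complex.I) h1
  simpa using this


private lemma rA_lb {α : ℝ} (hα0 : 0 < α) : 10 ^ 6 / α ≤ rA α := by
  have hrnn : 0 ≤ α ^ ((2:ℝ)/3 - 1) := Real.rpow_nonneg hα0.le _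
  have hbase : (10:ℝ) ^ 4 ≤ 100 * 1 * α ^ ((2:ℝ)/3 - 1) + 10 ^ 4 := by nlinarith
  have h32 : ((10:ℝ) ^ 4) ^ ((3:ℝ)/2) = 10 ^ 6 := by
    rw [show ((10:ℝ) ^ 4) = (10:ℝ) ^ ((4:ℕ):ℝ) by rw [Real.rpow_natCast],
      ← Real.rpow_mul (by norm_num)]
    rw [show ((4:ℕ):ℝ) * ((3:ℝ)/2) = ((6:ℕ):ℝ) by norm_num, Real.rpow_natCast]
  have hmono : (10:ℝ) ^ 6 ≤ (100 * 1 * α ^ ((2:ℝ)/3 - 1) + 10 ^ 4) ^ ((3:ℝ)/2) := by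
    rw [← h32]
    exact Real.rpow_le_rpow (by positivity) hbase (by norm_num)
  have hs : (10:ℝ) ^ 6 / α ≤ sConst α (2/3) 1 := by
    unfold sConst
    rw [show (1:ℝ) / (2/3) = (3:ℝ)/2 by norm_num]
    exact (div_le_div_iff_of_pos_right hα0).mpr hmono
  have hr2 : 0 ≤ 4 * rConst α (2/3) 1 * Real.sqrt (α ^ (-(4:ℝ)/3) + 3) := by
    have h1 : 0 ≤ rConst α (2/3) 1 := by
      unfold rConst
      have : (0:ℝ) ≤ 30 * 1 / (2/3) * α ^ ((2:ℝ)/3 - 1) := by positivity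
      nlinarith [Real.pi_pos]
    positivity
  unfold rA
  nlinarith [hs, hr2]

set_option maxHeartbeats 2000000 in
/-- Lemma 4.3: oscillatory integral estimate coupled with a periodic term. If
`a ∉ 2πℤ`, `α = min_{n∈ℤ}|a - 2πn|`, `Γ ∈ L²_loc` is 1-periodic, `γ` is locally
absolutely continuous with `γ mod 2π` 1-periodic, and
`|θ'(t) - a - γ'(t)| ≤ t^{-2/3}` a.e., then for `x ≥ x₀ > r(α)`,
`|∫_{x₀}^x Γ(t) sin θ(t)/t dt| ≤ ‖Γ‖₂ r(α)/x₀^{2/3}`. -/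
theorem oscillatory_integral_periodic_coupling
    (a : ℝ) (ha : ∀ n : ℤ, a ≠ 2 * π * n)
    (α : ℝ) (hα : IsLeast {r : ℝ | ∃ n : ℤ, r = |a - 2 * π * n|} α)
    (γ γ' : ℝ → ℝ)
    (hγAC : ∀ s t : ℝ, 0 < s → s ≤ t → γ t - γ s = ∫ u in s..t, γ' u)
    (hγInt : ∀ s t : ℝ, 0 < s → s ≤ t → IntervalIntegrable γ' volume s t)
    (hγper : ∀ t : ℝ, ∃ m : ℤ, γ (t + 1) - γ t = 2 * π * m)
    (Γ : ℝ → ℝ) (hΓmeas : Measurable Γ) (hΓper : Function.Periodic Γ 1)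
    (hΓL2 : IntervalIntegrable (fun t => Γ t ^ 2) volume 0 1)
    (θ θ' : ℝ → ℝ)
    (hθAC : ∀ s t : ℝ, 0 < s → s ≤ t → θ t - θ s = ∫ u in s..t, θ' u)
    (hθInt : ∀ s t : ℝ, 0 < s → s ≤ t → IntervalIntegrable θ' volume s t)
    (hbd : ∀ᵐ t ∂volume, 0 < t → |θ' t - a - γ' t| ≤ t ^ (-(2 : ℝ) / 3))
    (x₀ x : ℝ) (hx₀ : rA α < x₀) (hx : x₀ ≤ x) :
    |∫ t in x₀..x, Γ t * Real.sin (θ t) / t| ≤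
      Real.sqrt (∫ t in (0:ℝ)..1, Γ t ^ 2) * rA α / x₀ ^ ((2 : ℝ) / 3) := by
  obtain ⟨⟨n₀, hn₀⟩, hlb⟩ := hα
  set N := Real.sqrt (∫ t in (0:ℝ)..1, Γ t ^ 2) with hN
  have hNnn : 0 ≤ N := Real.sqrt_nonneg _
  -- basic facts about α
  have hα0 : 0 < α := by
    rcases (abs_nonneg (a - 2 * π * n₀)).lt_or_eq with h | h
    · rwa [hn₀]
    · exfalso; exact ha n₀ (by have := abs_eq_zero.1 h.symm; linarith)
  have hπ : (0:ℝ) < π := Real.pi_pos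
  have hαπ : α ≤ π := by
    have hmem : |a - 2 * π * (round (a / (2 * π)) : ℤ)| ∈
        {r : ℝ | ∃ n : ℤ, r = |a - 2 * π * n|} := ⟨_, rfl⟩
    have h1 := hlb hmem
    have h2 : |a - 2 * π * (round (a / (2 * π)) : ℤ)| ≤ π := by
      have h3 := abs_sub_round (a / (2 * π))
      have h4 : a - 2 * π * (round (a / (2 * π)) : ℤ) =
          (2 * π) * (a / (2 * π) - (round (a / (2 * π)) : ℤ)) := by field_simp
      rw [h4, abs_mul, abs_of_pos (by linarith : (0:ℝ) < 2 * π)]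
      nlinarith
    linarith
  have hrA : 10 ^ 6 / α ≤ rA α := rA_lb hα0
  have h1x₀ : 1 ≤ x₀ := by
    have h5 : (10:ℝ) ^ 6 / π ≤ 10 ^ 6 / α := by
      apply div_le_div_of_nonneg_left (by norm_num) hα0 hαπ
    have h6 : (1:ℝ) ≤ 10 ^ 6 / π := by
      rw [le_div_iff₀ hπ]
      nlinarith [Real.pi_le_four]
    linarith
  have hx₀0 : (0:ℝ) < x₀ := by linarith
  set M := x + 1 with hM
  -- f, continuity of θ
  set f : ℝ → ℂ := fun t => (Γ t : ℂ) * Complex.exp ((θ t : ℂ) * Complex.I) * ((t : ℂ))⁻¹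
    with hf
  have hθcont : ContinuousOn θ (Icc 1 M) := by
    have hMint : IntervalIntegrable θ' volume 1 M := hθInt 1 M one_pos (by linarith)
    have hprim := intervalIntegral.continuousOn_primitive_interval' hMint left_mem_uIcc
    have huIcc : uIcc (1:ℝ) M = Icc 1 M := uIcc_of_le (by linarith)
    rw [huIcc] at hprim
    refine ContinuousOn.congr ((continuousOn_const.add hprim :
      ContinuousOn (fun t => θ 1 + ∫ u in (1:ℝ)..t, θ' u) (Icc 1 M))) ?_
    intro t ht
    have h7 := hθAC 1 t one_pos ht.1
    simp only [Pi.add_apply]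
    linarith
  have hexpcont : ContinuousOn (fun t => Complex.exp ((θ t : ℂ) * Complex.I)) (Icc 1 M) :=
    Complex.continuous_exp.comp_continuousOn
      ((Complex.continuous_ofReal.comp_continuousOn hθcont).mul continuousOn_const)
  -- integrability of f
  have hfint : ∀ c d : ℝ, 1 ≤ c → c ≤ d → d ≤ M → IntervalIntegrable f volume c d := by
    intro c d h1c hcd hdM
    refine (abs_II hΓmeas hΓper hΓL2 c d).mono_fun ?_ ?_
    · have hsub : Set.uIoc c d ⊆ Icc 1 M := by
        rw [uIoc_of_le hcd]
        exact fun u hu => ⟨le_of_lt (lt_of_le_of_lt h1c hu.1), le_trans hu.2 hdM⟩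
      have h1 : AEStronglyMeasurable (fun t => (Γ t : ℂ)) (volume.restrict (Set.uIoc c d)) :=
        (Complex.measurable_ofReal.comp hΓmeas).aestronglyMeasurable
      have h2 : AEStronglyMeasurable (fun t => Complex.exp ((θ t : ℂ) * Complex.I))
          (volume.restrict (Set.uIoc c d)) := by
        refine ContinuousOn.aestronglyMeasurable (hexpcont.mono hsub) ?_
        rw [uIoc_of_le hcd]; exact measurableSet_Ioc
      have h3 : AEStronglyMeasurable (fun t : ℝ => ((t : ℂ))⁻¹) (volume.restrict (Set.uIoc c d)) :=
        ((Complex.measurable_ofReal.comp measurable_id).inv).aestronglyMeasurable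
      exact (h1.mul h2).mul h3
    · filter_upwards [ae_restrict_mem measurableSet_uIoc] with t ht
      rw [uIoc_of_le hcd] at ht
      have ht1 : 1 ≤ t := le_of_lt (lt_of_le_of_lt h1c ht.1)
      have htpos : 0 < t := by linarith
      have hnorm : ‖f t‖ = |Γ t| * |t|⁻¹ := by
        rw [hf]
        simp [norm_mul, Complex.norm_real,
          Complex.norm_exp_ofReal_mul_I, norm_inv]
      rw [hnorm]
      have : |t|⁻¹ ≤ 1 := by
        rw [abs_of_pos htpos]
        exact inv_le_one_of_one_le₀ ht1
      calc |Γ t| * |t|⁻¹ ≤ |Γ t| * 1 := by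
            exact mul_le_mul_of_nonneg_left this (abs_nonneg _)
        _ = ‖|Γ t|‖ := by rw [mul_one, Real.norm_eq_abs, abs_abs]
  -- the integrals
  set I := ∫ t in x₀..x, f t with hI_def
  set J := ∫ t in x₀..x, f (t + 1) with hJ_def
  have hIint : IntervalIntegrable f volume x₀ x := hfint x₀ x h1x₀ hx (by simp [hM])
  have hIint2 : IntervalIntegrable f volume x₀ (x₀ + 1) :=
    hfint x₀ (x₀ + 1) h1x₀ (by linarith) (by simp only [hM]; linarith)
  have hIint3 : IntervalIntegrable f volume x (x + 1) :=
    hfint x (x + 1) (by linarith) (by linarith) (by simp [hM])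
  have hIint4 : IntervalIntegrable f volume (x₀ + 1) (x + 1) :=
    hfint (x₀ + 1) (x + 1) (by linarith) (by linarith) (by simp [hM])
  have hJ : J = ∫ t in (x₀ + 1)..(x + 1), f t := intervalIntegral.integral_comp_add_right f 1
  have hJint : IntervalIntegrable (fun t => f (t + 1)) volume x₀ x := by
    have h8 := hIint4.comp_add_right 1
    simpa using h8
  have hsplit : I - J = (∫ t in x₀..(x₀ + 1), f t) - ∫ t in x..(x + 1), f t := by
    have h1 := intervalIntegral.integral_add_adjacent_intervals hIint2 hIint4
    have h2 := intervalIntegral.integral_add_adjacent_intervals hIint hIint3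
    rw [hJ]
    linear_combination h2 - h1
  -- boundary bound
  have hbdry : ∀ c : ℝ, 1 ≤ c → c + 1 ≤ M → ‖∫ t in c..(c + 1), f t‖ ≤ N * c ^ (-(2:ℝ)/3) := by
    intro c h1c hcM
    have hc0 : (0:ℝ) < c := by linarith
    have hg := wII hΓmeas hΓper hΓL2 (-(2:ℝ)/3) hc0 (by linarith : c ≤ c + 1)
    have hle := intervalIntegral.norm_integral_le_abs_of_norm_le
      (f := f) (g := fun t => |Γ t| * t ^ (-(2:ℝ)/3)) (μ := volume) (a := c) (b := c + 1) ?_ hg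
    · refine hle.trans ?_
      have hnn : 0 ≤ ∫ t in c..(c+1), |Γ t| * t ^ (-(2:ℝ)/3) := by
        refine intervalIntegral.integral_nonneg (by linarith) ?_
        intro u hu
        have : (0:ℝ) < u := by linarith [hu.1]
        positivity
      rw [abs_of_nonneg hnn]
      exact block_w hΓmeas hΓper hΓL2 (by norm_num) hc0
    · filter_upwards [ae_restrict_mem measurableSet_uIoc] with t ht
      rw [uIoc_of_le (by linarith : c ≤ c + 1)] at ht
      have ht1 : 1 ≤ t := le_of_lt (lt_of_le_of_lt h1c ht.1)
      have htpos : (0:ℝ) < t := by linarith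
      have hnorm : ‖f t‖ = |Γ t| * |t|⁻¹ := by
        rw [hf]
        simp [norm_mul, Complex.norm_real,
          Complex.norm_exp_ofReal_mul_I, norm_inv]
      rw [hnorm, abs_of_pos htpos]
      refine mul_le_mul_of_nonneg_left ?_ (abs_nonneg _)
      rw [← Real.rpow_neg_one t]
      exact Real.rpow_le_rpow_of_exponent_le ht1 (by norm_num)
  have hB : ‖I - J‖ ≤ 2 * (N * x₀ ^ (-(2:ℝ)/3)) := by
    rw [hsplit]
    have hb1 := hbdry x₀ h1x₀ (by simp only [hM]; linarith)
    have hb2 := hbdry x (by linarith) (by simp [hM])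
    have hb3 : N * x ^ (-(2:ℝ)/3) ≤ N * x₀ ^ (-(2:ℝ)/3) :=
      mul_le_mul_of_nonneg_left (Real.rpow_le_rpow_of_nonpos hx₀0 hx (by norm_num)) hNnn
    calc ‖(∫ t in x₀..(x₀+1), f t) - ∫ t in x..(x+1), f t‖
        ≤ ‖∫ t in x₀..(x₀+1), f t‖ + ‖∫ t in x..(x+1), f t‖ := norm_sub_le _ _
      _ ≤ 2 * (N * x₀ ^ (-(2:ℝ)/3)) := by linarith
  -- pointwise phase-shift estimate
  have hEbound : ∀ t ∈ Set.Ioc x₀ x,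
      ‖f (t + 1) - Complex.exp ((a:ℂ) * Complex.I) * f t‖ ≤ 3 * (|Γ t| * t ^ (-(5:ℝ)/3)) := by
    intro t ht
    have ht1 : 1 ≤ t := le_of_lt (lt_of_le_of_lt h1x₀ ht.1)
    have ht0 : (0:ℝ) < t := by linarith
    obtain ⟨m, hm⟩ := hγper t
    set ε := ∫ u in t..(t + 1), (θ' u - a - γ' u) with hε_def
    have hInt1 : IntervalIntegrable (fun u => θ' u - a - γ' u) volume t (t + 1) :=
      ((hθInt t (t+1) ht0 (by linarith)).sub
        (intervalIntegrable_const : IntervalIntegrable (fun _ => a) volume t (t+1))).sub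
        (hγInt t (t+1) ht0 (by linarith))
    have hrpowII : IntervalIntegrable (fun u : ℝ => u ^ (-(2:ℝ)/3)) volume t (t + 1) := by
      refine intervalIntegral.intervalIntegrable_rpow (Or.inr ?_)
      rw [uIcc_of_le (by linarith : t ≤ t + 1)]
      intro h; exact absurd h.1 (by linarith)
    have hεbd : |ε| ≤ t ^ (-(2:ℝ)/3) := by
      have h1 : |ε| ≤ ∫ u in t..(t+1), |θ' u - a - γ' u| :=
        intervalIntegral.abs_integral_le_integral_abs (by linarith)
      have h2 : ∫ u in t..(t+1), |θ' u - a - γ' u| ≤ ∫ u in t..(t+1), u ^ (-(2:ℝ)/3) := by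
        refine intervalIntegral.integral_mono_ae_restrict (by linarith) hInt1.abs hrpowII ?_
        filter_upwards [ae_restrict_of_ae hbd, ae_restrict_mem measurableSet_Icc] with u h1u h2u
        exact h1u (by linarith [h2u.1])
      have h3 : ∫ u in t..(t+1), u ^ (-(2:ℝ)/3) ≤ t ^ (-(2:ℝ)/3) := by
        have h4 : ∫ u in t..(t+1), u ^ (-(2:ℝ)/3) ≤ ∫ _ in t..(t+1), t ^ (-(2:ℝ)/3) := by
          refine intervalIntegral.integral_mono_on (by linarith) hrpowII
            intervalIntegrable_const ?_
          intro u hu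
          exact Real.rpow_le_rpow_of_nonpos ht0 hu.1 (by norm_num)
        simpa using h4
      linarith
    have hε1 : |ε| ≤ 1 := by
      have : t ^ (-(2:ℝ)/3) ≤ 1 := Real.rpow_le_one_of_one_le_of_nonpos ht1 (by norm_num)
      linarith
    have hθsum : θ (t + 1) = θ t + (a + 2 * π * m + ε) := by
      have h4 := hθAC t (t + 1) ht0 (by linarith)
      have h5 : (∫ u in t..(t+1), θ' u) = ε + a + (γ (t+1) - γ t) := by
        have hγI := hγInt t (t+1) ht0 (by linarith)
        have hac := hγAC t (t+1) ht0 (by linarith)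
        have e1 : ∀ u, θ' u = (θ' u - a - γ' u) + a + γ' u := fun u => by ring
        calc (∫ u in t..(t+1), θ' u)
            = ∫ u in t..(t+1), ((θ' u - a - γ' u) + a + γ' u) :=
              intervalIntegral.integral_congr (fun u _ => e1 u)
          _ = (∫ u in t..(t+1), ((θ' u - a - γ' u) + a)) + ∫ u in t..(t+1), γ' u := by
              rw [intervalIntegral.integral_add (hInt1.add intervalIntegrable_const) hγI]
          _ = ((∫ u in t..(t+1), (θ' u - a - γ' u)) + ∫ _u in t..(t+1), a)
                + ∫ u in t..(t+1), γ' u := by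
              rw [intervalIntegral.integral_add hInt1 intervalIntegrable_const]
          _ = ε + a + (γ (t+1) - γ t) := by
              rw [← hac, intervalIntegral.integral_const]
              simp [hε_def]
      rw [h5, hm] at h4
      linarith
    have hexp : Complex.exp ((θ (t+1) : ℂ) * Complex.I) =
        Complex.exp ((θ t : ℂ) * Complex.I) * Complex.exp ((a:ℂ) * Complex.I) *
          Complex.exp ((ε:ℂ) * Complex.I) := by
      rw [hθsum]
      push_cast
      rw [show ((θ t : ℂ) + (a + 2 * (π:ℂ) * m + ε)) * Complex.I =
        (θ t : ℂ) * Complex.I + (a:ℂ) * Complex.I + (ε:ℂ) * Complex.I +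
          (m:ℂ) * (2 * (π:ℂ) * Complex.I) by ring]
      rw [Complex.exp_add, Complex.exp_add, Complex.exp_add,
        Complex.exp_int_mul_two_pi_mul_I, mul_one]
    have hft1 : f (t + 1) = (Γ t : ℂ) * Complex.exp ((θ t : ℂ) * Complex.I) *
        Complex.exp ((a:ℂ) * Complex.I) * Complex.exp ((ε:ℂ) * Complex.I) *
          ((t:ℂ) + 1)⁻¹ := by
      rw [hf]
      simp only
      rw [show Γ (t + 1) = Γ t from hΓper t, hexp]
      push_cast
      ring
    have hdiff : f (t + 1) - Complex.exp ((a:ℂ) * Complex.I) * f t =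
        (Γ t : ℂ) * Complex.exp ((θ t : ℂ) * Complex.I) * Complex.exp ((a:ℂ) * Complex.I) *
          (Complex.exp ((ε:ℂ) * Complex.I) * ((t:ℂ) + 1)⁻¹ - ((t:ℂ))⁻¹) := by
      rw [hft1, hf]; ring
    rw [hdiff]
    have hsplit2 : Complex.exp ((ε:ℂ) * Complex.I) * ((t:ℂ) + 1)⁻¹ - ((t:ℂ))⁻¹ =
        (Complex.exp ((ε:ℂ) * Complex.I) - 1) * ((t:ℂ) + 1)⁻¹ +
          (((t:ℂ) + 1)⁻¹ - ((t:ℂ))⁻¹) := by ring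
    have hnorm1 : ‖((t:ℂ) + 1)⁻¹‖ = (t + 1)⁻¹ := by
      rw [show ((t:ℂ) + 1) = ((t + 1 : ℝ) : ℂ) by push_cast; ring]
      rw [norm_inv, Complex.norm_real, Real.norm_eq_abs, abs_of_pos (by linarith)]
    have hnorm2 : ‖((t:ℂ) + 1)⁻¹ - ((t:ℂ))⁻¹‖ = |(t + 1)⁻¹ - t⁻¹| := by
      rw [show ((t:ℂ) + 1)⁻¹ - ((t:ℂ))⁻¹ = (((t + 1)⁻¹ - t⁻¹ : ℝ) : ℂ) by push_cast; ring]
      rw [Complex.norm_real, Real.norm_eq_abs]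
    have hexpd : ‖Complex.exp ((ε:ℂ) * Complex.I) - 1‖ ≤ 2 * |ε| := exp_eps_sub_one hε1
    have h75 : t ^ (-(2:ℝ)/3) * t⁻¹ = t ^ (-(5:ℝ)/3) := by
      rw [← Real.rpow_neg_one t, ← Real.rpow_add ht0]
      norm_num
    have h2inv : |(t + 1)⁻¹ - t⁻¹| ≤ t ^ (-(5:ℝ)/3) := by
      have h9 : (t + 1)⁻¹ - t⁻¹ = -(t * (t+1))⁻¹ := by field_simp; ring
      rw [h9, abs_neg, abs_of_pos (by positivity)]
      have h10 : (t * t)⁻¹ ≤ t ^ (-(5:ℝ)/3) := by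
        have : (t * t)⁻¹ = t ^ (-(2:ℝ)) := by
          rw [show -(2:ℝ) = -1 + -1 by norm_num, Real.rpow_add ht0, Real.rpow_neg_one]
          field_simp
        rw [this]
        exact Real.rpow_le_rpow_of_exponent_le ht1 (by norm_num)
      have h11 : (t * (t+1))⁻¹ ≤ (t * t)⁻¹ := by
        apply inv_anti₀ (by positivity)
        nlinarith
      linarith
    have hinner : ‖Complex.exp ((ε:ℂ) * Complex.I) * ((t:ℂ) + 1)⁻¹ - ((t:ℂ))⁻¹‖ ≤
        3 * t ^ (-(5:ℝ)/3) := by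
      rw [hsplit2]
      have hA : ‖(Complex.exp ((ε:ℂ) * Complex.I) - 1) * ((t:ℂ) + 1)⁻¹‖ ≤
          2 * t ^ (-(5:ℝ)/3) := by
        rw [norm_mul, hnorm1]
        have h12 : ‖Complex.exp ((ε:ℂ) * Complex.I) - 1‖ * (t + 1)⁻¹ ≤
            (2 * t ^ (-(2:ℝ)/3)) * t⁻¹ := by
          apply mul_le_mul (by linarith) _ (by positivity) (by positivity)
          apply inv_anti₀ ht0
          linarith
        calc ‖Complex.exp ((ε:ℂ) * Complex.I) - 1‖ * (t + 1)⁻¹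
            ≤ (2 * t ^ (-(2:ℝ)/3)) * t⁻¹ := h12
          _ = 2 * t ^ (-(5:ℝ)/3) := by rw [mul_assoc, h75]
      calc ‖(Complex.exp ((ε:ℂ) * Complex.I) - 1) * ((t:ℂ) + 1)⁻¹ +
            (((t:ℂ) + 1)⁻¹ - ((t:ℂ))⁻¹)‖
          ≤ ‖(Complex.exp ((ε:ℂ) * Complex.I) - 1) * ((t:ℂ) + 1)⁻¹‖ +
            ‖((t:ℂ) + 1)⁻¹ - ((t:ℂ))⁻¹‖ := norm_add_le _ _
        _ ≤ 2 * t ^ (-(5:ℝ)/3) + t ^ (-(5:ℝ)/3) := by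
            rw [hnorm2]; exact add_le_add hA h2inv
        _ = 3 * t ^ (-(5:ℝ)/3) := by ring
    rw [norm_mul, norm_mul, norm_mul]
    have he1 : ‖Complex.exp ((θ t : ℂ) * Complex.I)‖ = 1 := by
      rw [Complex.norm_exp_ofReal_mul_I]
    have he2 : ‖Complex.exp ((a:ℂ) * Complex.I)‖ = 1 := by
      rw [Complex.norm_exp_ofReal_mul_I]
    have he3 : ‖(Γ t : ℂ)‖ = |Γ t| := by
      rw [Complex.norm_real, Real.norm_eq_abs]
    rw [he1, he2, he3, mul_one, mul_one]
    calc |Γ t| * ‖Complex.exp ((ε:ℂ) * Complex.I) * ((t:ℂ) + 1)⁻¹ - ((t:ℂ))⁻¹‖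
        ≤ |Γ t| * (3 * t ^ (-(5:ℝ)/3)) :=
          mul_le_mul_of_nonneg_left hinner (abs_nonneg _)
      _ = 3 * (|Γ t| * t ^ (-(5:ℝ)/3)) := by ring
  -- the shifted-integral comparison
  have hE : ‖J - Complex.exp ((a:ℂ) * Complex.I) * I‖ ≤
      3 * (N * (5/2) * x₀ ^ (-(2:ℝ)/3)) := by
    have h13 : J - Complex.exp ((a:ℂ) * Complex.I) * I =
        ∫ t in x₀..x, (f (t + 1) - Complex.exp ((a:ℂ) * Complex.I) * f t) := by
      rw [intervalIntegral.integral_sub hJint (hIint.const_mul _),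
        intervalIntegral.integral_const_mul]
    rw [h13]
    have hg3 : IntervalIntegrable (fun t => 3 * (|Γ t| * t ^ (-(5:ℝ)/3))) volume x₀ x :=
      (wII hΓmeas hΓper hΓL2 (-(5:ℝ)/3) hx₀0 hx).const_mul 3
    refine (intervalIntegral.norm_integral_le_abs_of_norm_le ?_ hg3).trans ?_
    · filter_upwards [ae_restrict_mem measurableSet_uIoc] with t ht
      rw [uIoc_of_le hx] at ht
      exact hEbound t ht
    · have hnn : 0 ≤ ∫ t in x₀..x, 3 * (|Γ t| * t ^ (-(5:ℝ)/3)) := by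
        refine intervalIntegral.integral_nonneg hx ?_
        intro u hu
        have : (0:ℝ) < u := by linarith [hu.1]
        positivity
      rw [abs_of_nonneg hnn, intervalIntegral.integral_const_mul]
      have htail := tail_bound hΓmeas hΓper hΓL2 h1x₀ hx
      have := mul_le_mul_of_nonneg_left htail (by norm_num : (0:ℝ) ≤ 3)
      linarith [this]
  -- key inequality
  have hexplb : 2 * α / π ≤ ‖Complex.exp ((a:ℂ) * Complex.I) - 1‖ := by
    exact exp_aI_sub_one_lb hα0 hαπ ⟨n₀, hn₀⟩
  have hItot : (2 * α / π) * ‖I‖ ≤ (19/2) * (N * x₀ ^ (-(2:ℝ)/3)) := by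
    have h15 : (Complex.exp ((a:ℂ) * Complex.I) - 1) * I =
        (Complex.exp ((a:ℂ) * Complex.I) * I - J) + (J - I) := by ring
    calc (2 * α / π) * ‖I‖
        ≤ ‖Complex.exp ((a:ℂ) * Complex.I) - 1‖ * ‖I‖ :=
          mul_le_mul_of_nonneg_right hexplb (norm_nonneg _)
      _ = ‖(Complex.exp ((a:ℂ) * Complex.I) - 1) * I‖ := (norm_mul _ _).symm
      _ = ‖(Complex.exp ((a:ℂ) * Complex.I) * I - J) + (J - I)‖ := by rw [h15]
      _ ≤ ‖Complex.exp ((a:ℂ) * Complex.I) * I - J‖ + ‖J - I‖ := norm_add_le _ _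
      _ ≤ 3 * (N * (5/2) * x₀ ^ (-(2:ℝ)/3)) + 2 * (N * x₀ ^ (-(2:ℝ)/3)) := by
          rw [norm_sub_rev (Complex.exp ((a:ℂ) * Complex.I) * I) J,
            norm_sub_rev J I]
          exact add_le_add hE hB
      _ = (19/2) * (N * x₀ ^ (-(2:ℝ)/3)) := by ring
  -- identify the real integral with the imaginary part
  have hIm : (∫ t in x₀..x, Γ t * Real.sin (θ t) / t) = I.im := by
    have h16 := ContinuousLinearMap.intervalIntegral_comp_comm Complex.imCLM hIint
    have h17 : ∀ t : ℝ, Complex.imCLM (f t) = Γ t * Real.sin (θ t) / t := by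
      intro t
      simp only [hf, Complex.imCLM_apply, ← Complex.ofReal_inv, Complex.mul_im,
        Complex.ofReal_re, Complex.ofReal_im, Complex.exp_ofReal_mul_I_re,
        Complex.exp_ofReal_mul_I_im, div_eq_mul_inv]
      ring
    calc (∫ t in x₀..x, Γ t * Real.sin (θ t) / t)
        = ∫ t in x₀..x, Complex.imCLM (f t) :=
          intervalIntegral.integral_congr (fun t _ => (h17 t).symm)
      _ = Complex.imCLM I := h16
      _ = I.im := rfl
  -- final arithmetic
  have habs : |I.im| ≤ ‖I‖ := by
    exact Complex.abs_im_le_norm I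
  rw [hIm]
  set Q := x₀ ^ (-(2:ℝ)/3) with hQ_def
  set P := x₀ ^ ((2:ℝ)/3) with hP_def
  have hP : 0 < P := Real.rpow_pos_of_pos hx₀0 _
  have hQpos : 0 < Q := Real.rpow_pos_of_pos hx₀0 _
  have hPinv : Q = P⁻¹ := by
    rw [hQ_def, hP_def, show -(2:ℝ)/3 = -((2:ℝ)/3) by norm_num, Real.rpow_neg hx₀0.le]
  have h2απ : 0 < 2 * α / π := by positivity
  have hI2 : ‖I‖ ≤ ((19/2) * (N * Q)) / (2 * α / π) := by
    rw [le_div_iff₀ h2απ, mul_comm]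
    exact hItot
  have hstep : ((19:ℝ)/2) * (N * Q) / (2 * α / π) = N * Q * (19 * π / (4 * α)) := by
    field_simp
    ring
  have h17a : 19 * π / (4 * α) ≤ 16 / α := by
    rw [div_le_div_iff₀ (by positivity) hα0]
    nlinarith [Real.pi_lt_d2, hα0]
  have h16a : (16:ℝ) / α ≤ rA α := by
    refine le_trans ?_ hrA
    exact (div_le_div_iff_of_pos_right hα0).mpr (by norm_num)
  calc |I.im| ≤ ‖I‖ := habs
    _ ≤ ((19/2) * (N * Q)) / (2 * α / π) := hI2
    _ = N * Q * (19 * π / (4 * α)) := hstep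
    _ ≤ N * Q * (16 / α) :=
        mul_le_mul_of_nonneg_left h17a (mul_nonneg hNnn hQpos.le)
    _ ≤ N * Q * rA α :=
        mul_le_mul_of_nonneg_left h16a (mul_nonneg hNnn hQpos.le)
    _ = N * rA α / P := by rw [hPinv, div_eq_mul_inv]; ring
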